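/- For every p > 0, every positive integer u, every t ≥ 0 and every H > 0, there exist constants k' > 0 and c > 0 such that for all σ ∈ (0,1): ∫_{|x| > k' |ln σ|^{1/p}} φ_{u,p}(x) |x|^t dx ≤ c σ^H. -/

import Mathlib

open MeasureTheory Real Set

/-- The kernel `ψ_{(p)}(x) = C_p exp(−|x|^p)` with `C_p = (2Γ(1+1/p))⁻¹`. -/
noncomputable def psiP (p : ℝ) (x : ℝ) : ℝ :=
  (2 * Real.Gamma (1 + 1 / p))⁻¹ * Real.exp (-|x| ^ p)

/-- `nfoldConv g n` is the `(n+1)`-fold convolution `g * g * ⋯ * g` (`n+1` factors). -/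
noncomputable def nfoldConv (g : ℝ → ℝ) : ℕ → ℝ → ℝ
  | 0 => g
  | n + 1 => fun x => ∫ y, nfoldConv g n y * g (x - y)

namespace Stmt10Aux


lemma key_ineq (p : ℝ) (hp : 0 < p) (x y : ℝ) :
    |x| ^ p ≤ 2 ^ p * (|y| ^ p + |x - y| ^ p) := by
  have h1 : |x| ≤ 2 * max |y| |x - y| := by
    calc |x| ≤ |y| + |x - y| := by
          have := abs_add_le y (x - y); simpa using this
    _ ≤ 2 * max |y| |x - y| := by
          rcases le_total |y| |x - y| with h | h
          · rw [max_eq_right h]; linarith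
          · rw [max_eq_left h]; linarith
  have h2 : |x| ^ p ≤ (2 * max |y| |x - y|) ^ p :=
    Real.rpow_le_rpow (abs_nonneg _) h1 hp.le
  have h3 : (2 * max |y| |x - y|) ^ p = 2 ^ p * (max |y| |x - y|) ^ p :=
    Real.mul_rpow (by norm_num) (le_max_iff.mpr (Or.inl (abs_nonneg _)))
  have h4 : (max |y| |x - y|) ^ p ≤ |y| ^ p + |x - y| ^ p := by
    rcases le_total |y| |x - y| with h | h
    · rw [max_eq_right h]
      nlinarith [Real.rpow_nonneg (abs_nonneg y) p]
    · rw [max_eq_left h]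
      nlinarith [Real.rpow_nonneg (abs_nonneg (x - y)) p]
  calc |x| ^ p ≤ (2 * max |y| |x - y|) ^ p := h2
  _ = 2 ^ p * (max |y| |x - y|) ^ p := h3
  _ ≤ 2 ^ p * (|y| ^ p + |x - y| ^ p) := by
      have : (0:ℝ) < 2 ^ p := Real.rpow_pos_of_pos (by norm_num) p
      nlinarith

lemma int_Ioi {p q b : ℝ} (hp : 0 < p) (hq : -1 < q) (hb : 0 < b) :
    IntegrableOn (fun x : ℝ => x ^ q * Real.exp (-b * x ^ p)) (Ioi 0) := by
  have key := (integrableOn_Ioi_comp_rpow_iff'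
    (fun y : ℝ => y ^ ((q + 1) / p - 1) * Real.exp (-b * y)) (ne_of_gt hp)).mpr
    (integrableOn_rpow_mul_exp_neg_mul_rpow (p := 1)
      (by linarith [div_pos (by linarith : (0:ℝ) < q+1) hp] : (-1:ℝ) < (q+1)/p - 1) one_pos hb
      |>.congr_fun (fun x hx => by beta_reduce; rw [Real.rpow_one]) measurableSet_Ioi)
  refine key.congr_fun (fun x hx => ?_) measurableSet_Ioi
  have hx0 : (0:ℝ) < x := hx
  beta_reduce
  rw [smul_eq_mul, ← Real.rpow_mul hx0.le, ← mul_assoc, ← Real.rpow_add hx0]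
  have he : p - 1 + p * ((q + 1) / p - 1) = q := by field_simp; ring
  rw [he]

lemma int_abs {p q b : ℝ} (hp : 0 < p) (hq : 0 ≤ q) (hb : 0 < b) :
    Integrable (fun x : ℝ => |x| ^ q * Real.exp (-b * |x| ^ p)) := by
  have hIoi : IntegrableOn (fun x : ℝ => |x| ^ q * Real.exp (-b * |x| ^ p)) (Ioi 0) := by
    refine (int_Ioi (q := q) (b := b) hp (by linarith) hb).congr_fun (fun x hx => ?_) measurableSet_Ioi
    rw [abs_of_pos (show (0:ℝ) < x from hx)]
  have hIic : IntegrableOn (fun x : ℝ => |x| ^ q * Real.exp (-b * |x| ^ p)) (Iic 0) := by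
    rw [← Measure.map_neg_eq_self (volume : Measure ℝ)]
    have m : MeasurableEmbedding fun x : ℝ => -x := (Homeomorph.neg ℝ).measurableEmbedding
    rw [m.integrableOn_map_iff]
    simp_rw [Function.comp_def, abs_neg, neg_preimage, neg_Iic, neg_zero]
    exact Iff.mpr integrableOn_Ici_iff_integrableOn_Ioi hIoi
  have h : IntegrableOn (fun x : ℝ => |x| ^ q * Real.exp (-b * |x| ^ p)) (Iic 0 ∪ Ioi 0) :=
    hIic.union hIoi
  rwa [Iic_union_Ioi, integrableOn_univ] at h

lemma int_exp_abs {p b : ℝ} (hp : 0 < p) (hb : 0 < b) :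
    Integrable (fun x : ℝ => Real.exp (-b * |x| ^ p)) := by
  have h := int_abs (q := 0) hp le_rfl hb
  refine h.congr ?_
  filter_upwards with x
  rw [Real.rpow_zero, one_mul]

lemma Cp_pos {p : ℝ} (hp : 0 < p) : 0 < (2 * Real.Gamma (1 + 1 / p))⁻¹ := by
  have : 0 < Real.Gamma (1 + 1 / p) :=
    Real.Gamma_pos_of_pos (by positivity)
  positivity

lemma psiP_nonneg {p : ℝ} (hp : 0 < p) (x : ℝ) : 0 ≤ psiP p x :=
  mul_nonneg (Cp_pos hp).le (Real.exp_nonneg _)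

lemma nfoldConv_nonneg {p : ℝ} (hp : 0 < p) (n : ℕ) (x : ℝ) :
    0 ≤ nfoldConv (psiP p) n x := by
  induction n generalizing x with
  | zero => exact psiP_nonneg hp x
  | succ n ih =>
      exact integral_nonneg fun y => mul_nonneg (ih y) (psiP_nonneg hp _)

lemma pointwise_bound {p : ℝ} (hp : 0 < p) (n : ℕ) :
    ∃ K δ : ℝ, 0 < K ∧ 0 < δ ∧ δ ≤ 1 ∧
      ∀ x, nfoldConv (psiP p) n x ≤ K * Real.exp (-δ * |x| ^ p) := by
  induction n with
  | zero =>
      refine ⟨(2 * Real.Gamma (1 + 1 / p))⁻¹, 1, Cp_pos hp, one_pos, le_rfl, fun x => ?_⟩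
      simp [nfoldConv, psiP, neg_mul, one_mul, le_refl]
  | succ n ih =>
      obtain ⟨K, δ, hK, hδ, hδ1, hbd⟩ := ih
      set Cp : ℝ := (2 * Real.Gamma (1 + 1 / p))⁻¹ with hCp
      have hCpp : 0 < Cp := Cp_pos hp
      set δ' : ℝ := δ / 2 * (2 ^ p)⁻¹ with hδ'
      have h2p : (0:ℝ) < 2 ^ p := Real.rpow_pos_of_pos (by norm_num) p
      have hδ'pos : 0 < δ' := by positivity
      have hinv : ((2:ℝ) ^ p)⁻¹ ≤ 1 := by
        have h1 : (1:ℝ) ≤ (2:ℝ) ^ p := Real.one_le_rpow one_le_two hp.le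
        nlinarith [mul_inv_cancel₀ (ne_of_gt h2p), inv_nonneg.mpr h2p.le]
      have hδ'le : δ' ≤ 1 := by
        rw [hδ']; nlinarith [inv_nonneg.mpr h2p.le]
      set I : ℝ := ∫ y : ℝ, Real.exp (-(δ/2) * |y| ^ p) with hI
      refine ⟨K * Cp * (|I| + 1), δ', by positivity, hδ'pos, hδ'le, fun x => ?_⟩
      have step1 : nfoldConv (psiP p) (n+1) x ≤
          ∫ y : ℝ, (K * Cp * Real.exp (-δ' * |x| ^ p)) * Real.exp (-(δ/2) * |y| ^ p) := by
        show (∫ y, nfoldConv (psiP p) n y * psiP p (x - y)) ≤ _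
        refine integral_mono_of_nonneg ?_ ?_ ?_
        · filter_upwards with y
          exact mul_nonneg (nfoldConv_nonneg hp n y) (psiP_nonneg hp _)
        · exact ((int_exp_abs hp (by positivity)).const_mul _)
        · filter_upwards with y
          have hb1 : nfoldConv (psiP p) n y ≤ K * Real.exp (-δ * |y| ^ p) := hbd y
          have hb2 : psiP p (x - y) ≤ Cp * Real.exp (-(1:ℝ) * |x - y| ^ p) := by
            simp [psiP, hCp, neg_mul, le_refl]
          have hmul : nfoldConv (psiP p) n y * psiP p (x - y) ≤
              (K * Real.exp (-δ * |y| ^ p)) * (Cp * Real.exp (-(1:ℝ) * |x - y| ^ p)) :=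
            mul_le_mul hb1 hb2 (psiP_nonneg hp _) (by positivity)
          refine hmul.trans ?_
          rw [show (K * Real.exp (-δ * |y| ^ p)) * (Cp * Real.exp (-(1:ℝ) * |x - y| ^ p))
              = K * Cp * Real.exp (-δ * |y| ^ p + -(1:ℝ) * |x - y| ^ p) by
            rw [Real.exp_add]; ring]
          rw [show (K * Cp * Real.exp (-δ' * |x| ^ p)) * Real.exp (-(δ/2) * |y| ^ p)
              = K * Cp * Real.exp (-δ' * |x| ^ p + -(δ/2) * |y| ^ p) by
            rw [Real.exp_add]; ring]
          refine mul_le_mul_of_nonneg_left (Real.exp_le_exp.mpr ?_) (by positivity)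
          have hk := key_ineq p hp x y
          have hyp : 0 ≤ |y| ^ p := Real.rpow_nonneg (abs_nonneg _) _
          have hxyp : 0 ≤ |x - y| ^ p := Real.rpow_nonneg (abs_nonneg _) _
          have h5 : δ' * |x| ^ p ≤ δ / 2 * (|y| ^ p + |x - y| ^ p) := by
            rw [hδ', mul_assoc]
            refine mul_le_mul_of_nonneg_left ?_ (by positivity)
            rw [inv_mul_le_iff₀ h2p]
            exact hk.trans_eq (by ring)
          nlinarith [h5, hxyp, hyp]
      refine step1.trans ?_
      rw [integral_const_mul]
      have hInn : I ≤ |I| + 1 := by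
        have := le_abs_self I; linarith
      calc K * Cp * Real.exp (-δ' * |x| ^ p) * I
          ≤ K * Cp * Real.exp (-δ' * |x| ^ p) * (|I| + 1) :=
            mul_le_mul_of_nonneg_left hInn (by positivity)
        _ = K * Cp * (|I| + 1) * Real.exp (-δ' * |x| ^ p) := by ring

end Stmt10Aux

open Stmt10Aux

/-- Lemma 8: tail bound for the `u`-fold convolution of `ψ_{(p)}`:
for all `t ≥ 0` and `H > 0` there are `k', c > 0` with
`∫_{|x| > k' |ln σ|^{1/p}} φ_{u,p}(x) |x|^t dx ≤ c σ^H` for all `σ ∈ (0,1)`. -/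
theorem stmt10 (p : ℝ) (hp : 0 < p) (u : ℕ) (hu : 1 ≤ u) (t : ℝ) (ht : 0 ≤ t)
    (H : ℝ) (hH : 0 < H) :
    ∃ k' c : ℝ, 0 < k' ∧ 0 < c ∧ ∀ σ : ℝ, 0 < σ → σ < 1 →
      (∫ x in {x : ℝ | k' * |Real.log σ| ^ (1 / p) < |x|},
        nfoldConv (psiP p) (u - 1) x * |x| ^ t) ≤ c * σ ^ H := by
  obtain ⟨K, δ, hK, hδ, hδ1, hbd⟩ := pointwise_bound hp (u - 1)
  set k' : ℝ := (2 * H / δ) ^ (1 / p) with hk'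
  have hk'pos : 0 < k' := Real.rpow_pos_of_pos (by positivity) _
  set J : ℝ := ∫ x : ℝ, Real.exp (-(δ/2) * |x| ^ p) * |x| ^ t with hJ
  have hJint : Integrable (fun x : ℝ => Real.exp (-(δ/2) * |x| ^ p) * |x| ^ t) := by
    refine (int_abs (q := t) (b := δ/2) hp ht (by positivity)).congr ?_
    filter_upwards with x; ring
  have hJ0 : 0 ≤ J :=
    integral_nonneg fun x => mul_nonneg (Real.exp_nonneg _)
      (Real.rpow_nonneg (abs_nonneg _) _)
  refine ⟨k', K * J + 1, hk'pos, by positivity, fun σ hσ0 hσ1 => ?_⟩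
  set R : ℝ := k' * |Real.log σ| ^ (1 / p) with hR
  have hlogneg : Real.log σ < 0 := Real.log_neg hσ0 hσ1
  have hlog : 0 < |Real.log σ| := by rw [abs_pos]; exact ne_of_lt hlogneg
  have hRpos : 0 < R := by positivity
  have hRp : R ^ p = (2 * H / δ) * |Real.log σ| := by
    rw [hR, Real.mul_rpow hk'pos.le (Real.rpow_nonneg hlog.le _), hk',
      ← Real.rpow_mul (by positivity : (0:ℝ) ≤ 2 * H / δ), ← Real.rpow_mul hlog.le,
      one_div, inv_mul_cancel₀ hp.ne', Real.rpow_one, Real.rpow_one]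
  have hS : MeasurableSet {x : ℝ | R < |x|} :=
    (isOpen_lt continuous_const continuous_abs).measurableSet
  have step1 : (∫ x in {x : ℝ | R < |x|}, nfoldConv (psiP p) (u - 1) x * |x| ^ t)
      ≤ ∫ x in {x : ℝ | R < |x|},
          (K * Real.exp (-(δ/2) * R ^ p)) * (Real.exp (-(δ/2) * |x| ^ p) * |x| ^ t) := by
    refine integral_mono_of_nonneg ?_ ((hJint.const_mul _).restrict) ?_
    · filter_upwards with x
      exact mul_nonneg (nfoldConv_nonneg hp _ x) (Real.rpow_nonneg (abs_nonneg _) _)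
    · refine (ae_restrict_iff' hS).mpr (Filter.Eventually.of_forall fun x hx => ?_)
      have hxR : R ≤ |x| := le_of_lt hx
      have hxp : R ^ p ≤ |x| ^ p := Real.rpow_le_rpow hRpos.le hxR hp.le
      have h1 : nfoldConv (psiP p) (u - 1) x * |x| ^ t ≤
          (K * Real.exp (-δ * |x| ^ p)) * |x| ^ t :=
        mul_le_mul_of_nonneg_right (hbd x) (Real.rpow_nonneg (abs_nonneg _) _)
      refine h1.trans ?_
      have h2 : Real.exp (-δ * |x| ^ p) ≤
          Real.exp (-(δ/2) * R ^ p) * Real.exp (-(δ/2) * |x| ^ p) := by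
        rw [← Real.exp_add]
        refine Real.exp_le_exp.mpr ?_
        nlinarith
      calc (K * Real.exp (-δ * |x| ^ p)) * |x| ^ t
          ≤ (K * (Real.exp (-(δ/2) * R ^ p) * Real.exp (-(δ/2) * |x| ^ p))) * |x| ^ t :=
            mul_le_mul_of_nonneg_right
              (mul_le_mul_of_nonneg_left h2 hK.le) (Real.rpow_nonneg (abs_nonneg _) _)
        _ = (K * Real.exp (-(δ/2) * R ^ p)) * (Real.exp (-(δ/2) * |x| ^ p) * |x| ^ t) := by
            ring
  have step2 : (∫ x in {x : ℝ | R < |x|},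
          (K * Real.exp (-(δ/2) * R ^ p)) * (Real.exp (-(δ/2) * |x| ^ p) * |x| ^ t))
      ≤ (K * Real.exp (-(δ/2) * R ^ p)) * J := by
    rw [← integral_const_mul]
    refine setIntegral_le_integral (hJint.const_mul _) ?_
    filter_upwards with x
    exact mul_nonneg (by positivity)
      (mul_nonneg (Real.exp_nonneg _) (Real.rpow_nonneg (abs_nonneg _) _))
  have hexp : Real.exp (-(δ/2) * R ^ p) = σ ^ H := by
    rw [hRp, Real.rpow_def_of_pos hσ0, abs_of_neg hlogneg]
    congr 1
    field_simp
  calc (∫ x in {x : ℝ | R < |x|}, nfoldConv (psiP p) (u - 1) x * |x| ^ t)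
      ≤ (K * Real.exp (-(δ/2) * R ^ p)) * J := step1.trans step2
    _ = (K * J) * σ ^ H := by rw [hexp]; ring
    _ ≤ (K * J + 1) * σ ^ H :=
        mul_le_mul_of_nonneg_right (by linarith) (Real.rpow_nonneg hσ0.le H)
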